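/- The bound 7/9 is attained: there exists a finite subset X of the Euclidean plane with all pairwise distances distinct, |X| = 9, such that exactly 7 of its elements are not the nearest neighbour of any other element. -/

import Mathlib

namespace Stmt7Aux

def cx : Fin 9 → ℤ := ![-2, 101, 16, -87, -87, 17, 137, 212, 131]
def cy : Fin 9 → ℤ := ![-2, -2, 100, 62, -62, -106, 102, 2, -111]

def q (i j : Fin 9) : ℤ := (cx i - cx j) ^ 2 + (cy i - cy j) ^ 2

noncomputable def P (i : Fin 9) : EuclideanSpace ℝ (Fin 2) :=
  !₂[(cx i : ℝ), (cy i : ℝ)]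

lemma q_nonneg (i j : Fin 9) : (0 : ℝ) ≤ (q i j : ℝ) := by
  have : (0 : ℤ) ≤ q i j := add_nonneg (sq_nonneg _) (sq_nonneg _)
  exact_mod_cast this

lemma dist_P (i j : Fin 9) : dist (P i) (P j) = Real.sqrt ((q i j : ℝ)) := by
  rw [EuclideanSpace.dist_eq]
  congr 1
  rw [Fin.sum_univ_two]
  simp only [P, PiLp.toLp_apply, Matrix.cons_val_zero, Matrix.cons_val_one, Matrix.head_cons,
    Real.dist_eq, sq_abs, q]
  push_cast
  ring

lemma dist_eq_iff (i j k l : Fin 9) :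
    dist (P i) (P j) = dist (P k) (P l) ↔ q i j = q k l := by
  rw [dist_P, dist_P]
  rw [Real.sqrt_inj (q_nonneg i j) (q_nonneg k l)]
  exact_mod_cast Iff.rfl

lemma dist_lt_iff (i j k l : Fin 9) :
    dist (P i) (P j) < dist (P k) (P l) ↔ q i j < q k l := by
  rw [dist_P, dist_P]
  rw [Real.sqrt_lt_sqrt_iff (q_nonneg i j)]
  constructor
  · intro h
    have h' : (q i j : ℝ) < (q k l : ℝ) :=
      lt_of_lt_of_le h (Real.sq_sqrt (q_nonneg k l) ▸ le_of_eq rfl) |>.trans_le le_rfl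
    exact_mod_cast h'
  · intro h; exact_mod_cast h

lemma P_inj : Function.Injective P := by
  intro i j h
  have key : ∀ i j : Fin 9, q i j = 0 → i = j := by decide
  have hd : dist (P i) (P j) = 0 := by rw [h, dist_self]
  rw [dist_P, Real.sqrt_eq_zero (q_nonneg i j)] at hd
  exact key i j (by exact_mod_cast hd)

end Stmt7Aux

open Stmt7Aux in
/-- The bound `7/9` is sharp: there is a nine-point subset of the Euclidean
plane with all pairwise distances distinct in which exactly seven points are
not the nearest neighbour of any other point. -/
theorem stmt_7 :
    ∃ X : Finset (EuclideanSpace ℝ (Fin 2)),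
      X.card = 9 ∧
      (∀ x ∈ X, ∀ y ∈ X, ∀ x' ∈ X, ∀ y' ∈ X, x ≠ y → x' ≠ y' →
        dist x y = dist x' y' →
        ({x, y} : Set (EuclideanSpace ℝ (Fin 2))) = {x', y'}) ∧
      {x : EuclideanSpace ℝ (Fin 2) | x ∈ X ∧
        ∀ y ∈ X, y ≠ x →
          ¬ (∀ z ∈ X, z ≠ y → z ≠ x → dist y x < dist y z)}.ncard = 7 := by
  classical
  refine ⟨Finset.image P Finset.univ, ?_, ?_, ?_⟩
  · rw [Finset.card_image_of_injective _ P_inj, Finset.card_univ, Fintype.card_fin]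
  · rintro x hx y hy x' hx' y' hy' hxy hx'y' hd
    obtain ⟨i, -, rfl⟩ := Finset.mem_image.1 hx
    obtain ⟨j, -, rfl⟩ := Finset.mem_image.1 hy
    obtain ⟨k, -, rfl⟩ := Finset.mem_image.1 hx'
    obtain ⟨l, -, rfl⟩ := Finset.mem_image.1 hy'
    have hij : i ≠ j := fun h => hxy (by rw [h])
    have hkl : k ≠ l := fun h => hx'y' (by rw [h])
    rw [dist_eq_iff] at hd
    have key0 : ∀ i j k l : Fin 9, i ≠ j → k ≠ l → q i j = q k l →
        (i = k ∧ j = l) ∨ (i = l ∧ j = k) := by decide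
    have key := key0 i j k l hij hkl hd
    rcases key with ⟨rfl, rfl⟩ | ⟨rfl, rfl⟩
    · rfl
    · exact Set.pair_comm _ _
  · have forall_X : ∀ Φ : EuclideanSpace ℝ (Fin 2) → Prop,
        (∀ z ∈ Finset.image P Finset.univ, Φ z) ↔ ∀ k, Φ (P k) := by
      intro Φ
      constructor
      · intro h k; exact h _ (Finset.mem_image_of_mem _ (Finset.mem_univ k))
      · intro h z hz
        obtain ⟨k, -, rfl⟩ := Finset.mem_image.1 hz
        exact h k
    have hset : {x : EuclideanSpace ℝ (Fin 2) | x ∈ Finset.image P Finset.univ ∧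
        ∀ y ∈ Finset.image P Finset.univ, y ≠ x →
          ¬ (∀ z ∈ Finset.image P Finset.univ, z ≠ y → z ≠ x → dist y x < dist y z)}
        = ↑(Finset.image P ({2,3,4,5,6,7,8} : Finset (Fin 9))) := by
      ext x
      simp only [Set.mem_setOf_eq, Finset.coe_image, Set.mem_image, Finset.mem_coe]
      constructor
      · rintro ⟨hx, hmain⟩
        obtain ⟨i, -, rfl⟩ := Finset.mem_image.1 hx
        refine ⟨i, ?_, rfl⟩
        have hG : ∀ j : Fin 9, j ≠ i →
            ¬ (∀ k : Fin 9, k ≠ j → k ≠ i → q j i < q j k) := by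
          intro j hj hall
          refine hmain (P j) (Finset.mem_image_of_mem _ (Finset.mem_univ j))
            (fun h => hj (P_inj h)) ?_
          rw [forall_X]
          intro k hkj hki
          rw [dist_lt_iff]
          exact hall k (fun h => hkj (by rw [h])) (fun h => hki (by rw [h]))
        have key1 : ∀ i : Fin 9,
            (∀ j : Fin 9, j ≠ i → ¬ (∀ k : Fin 9, k ≠ j → k ≠ i → q j i < q j k)) →
            i ∈ ({2,3,4,5,6,7,8} : Finset (Fin 9)) := by decide
        exact key1 i hG
      · rintro ⟨i, hi, rfl⟩
        refine ⟨Finset.mem_image_of_mem _ (Finset.mem_univ i), ?_⟩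
        intro y hy hyx
        obtain ⟨j, -, rfl⟩ := Finset.mem_image.1 hy
        have hji : j ≠ i := fun h => hyx (by rw [h])
        rw [forall_X]
        intro hall
        have hall' : ∀ k : Fin 9, k ≠ j → k ≠ i → q j i < q j k := by
          intro k hkj hki
          rw [← dist_lt_iff]
          exact hall k (fun h => hkj (P_inj h)) (fun h => hki (P_inj h))
        have key2 : ∀ i : Fin 9, i ∈ ({2,3,4,5,6,7,8} : Finset (Fin 9)) →
            ∀ j : Fin 9, j ≠ i →
            ¬ (∀ k : Fin 9, k ≠ j → k ≠ i → q j i < q j k) := by decide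
        exact key2 i hi j hji hall'
    rw [hset, Set.ncard_coe_finset,
      Finset.card_image_of_injective _ P_inj]
    decide
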